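/- arXiv:1310.5605 — 2 statements merged into one kernel-verified Lean document; each statement's English description precedes it below -/
import Mathlib

section
/- Fix λ, ε ∈ ℝ, T > 0, an integer N ≥ 1, and h = T/N. For p ∈ {1,2,3} let φ(y) = (X̄(N;y))^p for y ∈ ℝ^N. Then the level-2 Smolyak sparse grid quadrature built from one-dimensional Gauss–Hermite rules reproduces exactly the Rademacher expectation: E[(X̄(N;ζ))^p] = A(2,N)φ, where ζ = (ζ_1,…,ζ_N) are i.i.d. Rademacher variables. -/
open MeasureTheory ProbabilityTheory Finset

noncomputable section

/-- Evaluation of the probabilists' Hermite polynomial `H_n`. -/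
def hermiteEval (n : ℕ) (y : ℝ) : ℝ := Polynomial.aeval y (Polynomial.hermite n)

/-- One-dimensional quadrature `Q_n ψ = ∑ ψ(y_{n,α}) w_{n,α}` with prescribed nodes and weights
(in particular `Q_0 = 0`). -/
def ghQuad (node weight : (n : ℕ) → Fin n → ℝ) (n : ℕ) (ψ : ℝ → ℝ) : ℝ :=
  ∑ α : Fin n, ψ (node n α) * weight n α

/-- `node`/`weight` are the Gauss–Hermite nodes (the increasing enumeration of the `n` roots of
the probabilists' Hermite polynomial `H_n`) together with the Gauss–Hermite weights
`w_{n,α} = n! / (n² H_{n-1}(y_{n,α})²)`. -/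
def IsGaussHermite (node weight : (n : ℕ) → Fin n → ℝ) : Prop :=
  (∀ n : ℕ, StrictMono (node n)) ∧
  (∀ (n : ℕ) (α : Fin n), hermiteEval n (node n α) = 0) ∧
  (∀ (n : ℕ) (α : Fin n),
    weight n α = (Nat.factorial n : ℝ) / ((n : ℝ) ^ 2 * hermiteEval (n - 1) (node n α) ^ 2))

/-- Standard Gaussian integral `I₁ ψ = (2π)^{-1/2} ∫ ψ(y) e^{-y²/2} dy`. -/
def gaussInt (ψ : ℝ → ℝ) : ℝ := ∫ y, ψ y ∂(gaussianReal 0 1)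

/-- `N`-dimensional standard Gaussian integral `I_N φ`. -/
def gaussIntN (N : ℕ) (φ : (Fin N → ℝ) → ℝ) : ℝ :=
  ∫ y, φ y ∂(MeasureTheory.Measure.pi fun _ : Fin N => gaussianReal 0 1)

/-- Apply a one-dimensional functional `T` in the `k`-th coordinate of a function of `N`
variables. -/
def applyCoord {N : ℕ} (T : (ℝ → ℝ) → ℝ) (k : Fin N) (φ : (Fin N → ℝ) → ℝ) :
    (Fin N → ℝ) → ℝ :=
  fun y => T fun t => φ (Function.update y k t)

/-- Tensor product `T_1 ⊗ ⋯ ⊗ T_N` of one-dimensional functionals, applied to `φ`. -/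
def tensorApply {N : ℕ} (T : Fin N → ((ℝ → ℝ) → ℝ)) (φ : (Fin N → ℝ) → ℝ) : ℝ :=
  ((List.finRange N).foldr (fun k ψ => applyCoord (T k) k ψ) φ) fun _ => 0

/-- The level-`L` Smolyak sparse grid quadrature
`A(L,d)φ = ∑_{d ≤ |i| ≤ L+d-1} (Q_{i_1}-Q_{i_1-1}) ⊗ ⋯ ⊗ (Q_{i_d}-Q_{i_d-1}) φ`
(each `i_k ≥ 1`; note that the constraints force `i_k ≤ L`, so summing over
`i : Fin d → Fin (L+2)` loses no terms). -/
def smolyak (node weight : (n : ℕ) → Fin n → ℝ) (L d : ℕ) (φ : (Fin d → ℝ) → ℝ) : ℝ :=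
  ∑ i : Fin d → Fin (L + 2),
    if (∀ k, 1 ≤ (i k : ℕ)) ∧ d ≤ (∑ k, (i k : ℕ)) ∧ (∑ k, (i k : ℕ)) ≤ L + d - 1 then
      tensorApply
        (fun k ψ => ghQuad node weight (i k : ℕ) ψ - ghQuad node weight ((i k : ℕ) - 1) ψ) φ
    else 0

/-- The Peano kernel `Γ_{y,γ}(z) = (z-y)^{γ-1}/(γ-1)!` for `z ≥ y`, `0` otherwise. -/
def peanoKernel (y : ℝ) (γ : ℕ) : ℝ → ℝ :=
  fun z => if y ≤ z then (z - y) ^ (γ - 1) / (Nat.factorial (γ - 1) : ℝ) else 0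

/-- The Gauss–Hermite quadrature error on the Peano kernel, `R_{n,γ}(Γ_{y,γ})`. -/
def ghErr (node weight : (n : ℕ) → Fin n → ℝ) (n γ : ℕ) (y : ℝ) : ℝ :=
  ghQuad node weight n (peanoKernel y γ) - gaussInt (peanoKernel y γ)

/-- Euler scheme `X̄(N;y) = (1+λh)^N + ∑_{j=1}^N (1+λh)^{N-j} ε √h y_j` for
`dX = λX dt + ε dw`, `X(0) = 1`. -/
def eulerX (lam eps h : ℝ) (N : ℕ) (y : Fin N → ℝ) : ℝ :=
  (1 + lam * h) ^ N +
    ∑ j : Fin N, (1 + lam * h) ^ (N - ((j : ℕ) + 1)) * eps * Real.sqrt h * y j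

/-- Expectation over `d` i.i.d. Rademacher variables: `E g(ζ) = 2^{-d} ∑_{s ∈ {-1,1}^d} g(s)`. -/
def radExp (d : ℕ) (g : (Fin d → ℝ) → ℝ) : ℝ :=
  (1 / 2 ^ d) * ∑ s : Fin d → Bool, g fun k => if s k then 1 else -1

/-- Expectation over `d` i.i.d. variables with `P(ζ = ±√3) = 1/6`, `P(ζ = 0) = 2/3`. -/
def threePointExp (d : ℕ) (g : (Fin d → ℝ) → ℝ) : ℝ :=
  ∑ s : Fin d → Fin 3,
    (∏ k, ![(1 : ℝ) / 6, 2 / 3, 1 / 6] (s k)) *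
      g fun k => ![Real.sqrt 3, 0, -Real.sqrt 3] (s k)

/-- Partial derivative in the `k`-th coordinate. -/
def pderivCoord {d : ℕ} (k : Fin d) (φ : (Fin d → ℝ) → ℝ) : (Fin d → ℝ) → ℝ :=
  fun y => deriv (fun t => φ (Function.update y k t)) (y k)

/-- Mixed partial derivative `D^α` for a multi-index `α`. -/
def mderiv {d : ℕ} (α : Fin d → ℕ) (φ : (Fin d → ℝ) → ℝ) : (Fin d → ℝ) → ℝ :=
  (List.finRange d).foldr (fun k ψ => (pderivCoord k)^[α k] ψ) φ

end

section AuxGH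

lemma hermiteEval_zero' (y : ℝ) : hermiteEval 0 y = 1 := by
  simp [hermiteEval, Polynomial.hermite_zero]

lemma hermiteEval_one' (y : ℝ) : hermiteEval 1 y = y := by
  simp [hermiteEval, Polynomial.hermite_one]

lemma hermiteEval_two' (y : ℝ) : hermiteEval 2 y = y ^ 2 - 1 := by
  show Polynomial.aeval y (Polynomial.hermite (1 + 1)) = y ^ 2 - 1
  rw [Polynomial.hermite_succ, Polynomial.hermite_one]
  simp [sq]

variable {node weight : (n : ℕ) → Fin n → ℝ}

lemma node_one (h : IsGaussHermite node weight) : node 1 0 = 0 := by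
  have := h.2.1 1 0
  rwa [hermiteEval_one'] at this

lemma weight_one (h : IsGaussHermite node weight) : weight 1 0 = 1 := by
  rw [h.2.2 1 0]
  norm_num [hermiteEval_zero']

lemma node_two_sq (h : IsGaussHermite node weight) (α : Fin 2) : node 2 α ^ 2 = 1 := by
  have h0 := h.2.1 2 α
  rw [hermiteEval_two'] at h0
  linarith

lemma node_two (h : IsGaussHermite node weight) : node 2 0 = -1 ∧ node 2 1 = 1 := by
  have e0 := node_two_sq h 0
  have e1 := node_two_sq h 1
  have hm : node 2 0 < node 2 1 := h.1 2 (by decide : (0 : Fin 2) < 1)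
  have d0 : node 2 0 = 1 ∨ node 2 0 = -1 := by
    rcases mul_eq_zero.mp (show (node 2 0 - 1) * (node 2 0 + 1) = 0 by nlinarith) with h | h
    · left; linarith
    · right; linarith
  have d1 : node 2 1 = 1 ∨ node 2 1 = -1 := by
    rcases mul_eq_zero.mp (show (node 2 1 - 1) * (node 2 1 + 1) = 0 by nlinarith) with h | h
    · left; linarith
    · right; linarith
  rcases d0 with h0 | h0 <;> rcases d1 with h1 | h1 <;>
    first
      | (exact ⟨h0, h1⟩)
      | (exfalso; rw [h0, h1] at hm; linarith)

lemma weight_two (h : IsGaussHermite node weight) (α : Fin 2) : weight 2 α = 1/2 := by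
  rw [h.2.2 2 α, hermiteEval_one', node_two_sq h]
  norm_num [Nat.factorial]

lemma ghQuad_zero' (ψ : ℝ → ℝ) : ghQuad node weight 0 ψ = 0 := by
  simp [ghQuad]

lemma ghQuad_one' (h : IsGaussHermite node weight) (ψ : ℝ → ℝ) :
    ghQuad node weight 1 ψ = ψ 0 := by
  simp [ghQuad, Fin.sum_univ_one, node_one h, weight_one h]

lemma ghQuad_two' (h : IsGaussHermite node weight) (ψ : ℝ → ℝ) :
    ghQuad node weight 2 ψ = ψ (-1) * (1/2) + ψ 1 * (1/2) := by
  simp [ghQuad, Fin.sum_univ_two, (node_two h).1, (node_two h).2, weight_two h]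

end AuxGH
section AuxTensor

open Finset

lemma foldr_eval0 {N : ℕ} (Tt : Fin N → (ℝ → ℝ) → ℝ) (φ : (Fin N → ℝ) → ℝ) :
    ∀ l : List (Fin N), (∀ k ∈ l, ∀ ψ : ℝ → ℝ, Tt k ψ = ψ 0) → ∀ y : Fin N → ℝ,
      (l.foldr (fun k ψ => applyCoord (Tt k) k ψ) φ) y
        = φ (fun i => if i ∈ l then 0 else y i) := by
  intro l
  induction l with
  | nil => intro _ y; simp
  | cons k l ih =>
      intro hl y
      have hk := hl k List.mem_cons_self
      simp only [List.foldr_cons, applyCoord, hk]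
      rw [ih (fun k' hk' ψ => hl k' (List.mem_cons_of_mem _ hk') ψ)]
      congr 1
      funext i
      by_cases h1 : i ∈ l
      · simp [h1, List.mem_cons]
      · by_cases h2 : i = k
        · subst h2; simp [h1]
        · simp [h1, h2, Function.update_of_ne h2]

lemma foldr_mix {N : ℕ} (Tt : Fin N → (ℝ → ℝ) → ℝ) (k₀ : Fin N) (w pt : Fin 3 → ℝ)
    (hT0 : ∀ k, k ≠ k₀ → ∀ ψ : ℝ → ℝ, Tt k ψ = ψ 0)
    (hTk : ∀ ψ : ℝ → ℝ, Tt k₀ ψ = ∑ j, w j * ψ (pt j)) (φ : (Fin N → ℝ) → ℝ) :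
    ∀ l : List (Fin N), l.Nodup → k₀ ∈ l → ∀ y : Fin N → ℝ,
      (l.foldr (fun k ψ => applyCoord (Tt k) k ψ) φ) y
        = ∑ j, w j * φ (fun i => if i = k₀ then pt j else if i ∈ l then 0 else y i) := by
  intro l
  induction l with
  | nil => intro _ h; cases h
  | cons k l ih =>
      intro hnd hmem y
      by_cases hk : k = k₀
      · subst hk
        have hnotin : k ∉ l := (List.nodup_cons.mp hnd).1
        simp only [List.foldr_cons, applyCoord, hTk]
        refine Finset.sum_congr rfl fun j _ => ?_
        congr 1
        rw [foldr_eval0 Tt φ l (fun k' hk' ψ => hT0 k' (fun h => hnotin (h ▸ hk')) ψ)]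
        congr 1
        funext i
        by_cases h1 : i = k
        · subst h1; simp [hnotin]
        · by_cases h2 : i ∈ l
          · simp [h1, h2, List.mem_cons]
          · simp [h1, h2, Function.update_of_ne h1, List.mem_cons]
      · have hmem' : k₀ ∈ l := by
          rcases List.mem_cons.mp hmem with h | h
          · exact absurd h.symm hk
          · exact h
        simp only [List.foldr_cons, applyCoord, hT0 k hk]
        rw [ih (List.nodup_cons.mp hnd).2 hmem']
        refine Finset.sum_congr rfl fun j _ => ?_
        refine congrArg _ (congrArg φ ?_)
        funext i
        by_cases h1 : i = k₀
        · simp [h1]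
        · by_cases h2 : i ∈ l
          · simp [h1, h2, List.mem_cons]
          · by_cases h3 : i = k
            · subst h3; simp [h1, h2]
            · simp [h1, h2, h3, Function.update_of_ne h3, List.mem_cons]

lemma tensorApply_eval {N : ℕ} (Tt : Fin N → (ℝ → ℝ) → ℝ)
    (hT : ∀ k, ∀ ψ : ℝ → ℝ, Tt k ψ = ψ 0) (φ : (Fin N → ℝ) → ℝ) :
    tensorApply Tt φ = φ (fun _ => 0) := by
  unfold tensorApply
  rw [foldr_eval0 Tt φ (List.finRange N) (fun k _ => hT k)]
  congr 1
  funext i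
  simp [List.mem_finRange]

lemma tensorApply_mix {N : ℕ} (Tt : Fin N → (ℝ → ℝ) → ℝ) (k₀ : Fin N) (w pt : Fin 3 → ℝ)
    (hT0 : ∀ k, k ≠ k₀ → ∀ ψ : ℝ → ℝ, Tt k ψ = ψ 0)
    (hTk : ∀ ψ : ℝ → ℝ, Tt k₀ ψ = ∑ j, w j * ψ (pt j)) (φ : (Fin N → ℝ) → ℝ) :
    tensorApply Tt φ = ∑ j, w j * φ (fun i => if i = k₀ then pt j else 0) := by
  unfold tensorApply
  rw [foldr_mix Tt k₀ w pt hT0 hTk φ (List.finRange N) (List.nodup_finRange N)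
    (List.mem_finRange k₀)]
  refine Finset.sum_congr rfl fun j _ => ?_
  refine congrArg _ (congrArg φ ?_)
  funext i
  simp [List.mem_finRange]

end AuxTensor
section AuxSmolyak

open Finset

lemma cond_iff {N : ℕ} (hN : 1 ≤ N) (i : Fin N → Fin 4) :
    ((∀ k, 1 ≤ (i k : ℕ)) ∧ N ≤ (∑ k, (i k : ℕ)) ∧ (∑ k, (i k : ℕ)) ≤ 2 + N - 1)
      ↔ (i = fun _ => 1) ∨ ∃ k₀, i = Function.update (fun _ => (1 : Fin 4)) k₀ 2 := by
  constructor
  · rintro ⟨h1, -, h3⟩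
    have h3' : (∑ k, (i k : ℕ)) ≤ N + 1 := by omega
    by_cases hall : ∀ k, (i k : ℕ) = 1
    · left; funext k; exact Fin.ext (by rw [hall k]; rfl)
    · right
      push_neg at hall
      obtain ⟨k₀, hk₀⟩ := hall
      have h2k : 2 ≤ (i k₀ : ℕ) := by have := h1 k₀; omega
      have key : ∀ k, k ≠ k₀ → (i k : ℕ) = 1 := by
        intro k hk
        by_contra hne
        have h2 : 2 ≤ (i k : ℕ) := by have := h1 k; omega
        have hsplit : ∑ x ∈ (univ \ {k₀, k} : Finset (Fin N)), (i x : ℕ)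
            + ∑ x ∈ ({k₀, k} : Finset (Fin N)), (i x : ℕ) = ∑ x, (i x : ℕ) :=
          Finset.sum_sdiff (Finset.subset_univ _)
        have hpair : ∑ x ∈ ({k₀, k} : Finset (Fin N)), (i x : ℕ) = (i k₀ : ℕ) + (i k : ℕ) :=
          Finset.sum_pair (Ne.symm hk)
        have hrest : (univ \ ({k₀, k} : Finset (Fin N))).card • 1
            ≤ ∑ x ∈ (univ \ {k₀, k} : Finset (Fin N)), (i x : ℕ) :=
          Finset.card_nsmul_le_sum _ _ _ (fun x _ => h1 x)
        have hcard : (univ \ ({k₀, k} : Finset (Fin N))).card = N - 2 := by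
          rw [Finset.card_sdiff_of_subset (Finset.subset_univ _), Finset.card_pair (Ne.symm hk),
            Finset.card_univ, Fintype.card_fin]
        rw [hcard, smul_eq_mul, mul_one] at hrest
        have hN2 : 2 ≤ N := by
          have : ({k₀, k} : Finset (Fin N)).card ≤ (univ : Finset (Fin N)).card :=
            Finset.card_le_card (Finset.subset_univ _)
          rw [Finset.card_pair (Ne.symm hk), Finset.card_univ, Fintype.card_fin] at this
          omega
        omega
      have hk2 : (i k₀ : ℕ) = 2 := by
        have hsplit : (i k₀ : ℕ) + ∑ x ∈ univ.erase k₀, (i x : ℕ) = ∑ x, (i x : ℕ) :=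
          Finset.add_sum_erase _ (fun x => ((i x : ℕ))) (Finset.mem_univ k₀)
        have hrest : (univ.erase k₀).card • 1 ≤ ∑ x ∈ univ.erase k₀, (i x : ℕ) :=
          Finset.card_nsmul_le_sum _ _ _ (fun x _ => h1 x)
        rw [Finset.card_erase_of_mem (Finset.mem_univ k₀), Finset.card_univ,
          Fintype.card_fin, smul_eq_mul, mul_one] at hrest
        omega
      refine ⟨k₀, funext fun k => ?_⟩
      by_cases hk : k = k₀
      · subst hk; rw [Function.update_self]; exact Fin.ext (by rw [hk2]; rfl)
      · rw [Function.update_of_ne hk]; exact Fin.ext (by rw [key k hk]; rfl)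
  · rintro (rfl | ⟨k₀, rfl⟩)
    · have hv : ∀ k : Fin N, (((fun _ => (1 : Fin 4)) k : Fin 4) : ℕ) = 1 := fun _ => rfl
      refine ⟨fun k => le_of_eq (hv k).symm, ?_, ?_⟩ <;>
        · rw [Finset.sum_congr rfl (fun k _ => hv k), Finset.sum_const, Finset.card_univ,
            Fintype.card_fin, smul_eq_mul, mul_one]
          try omega
    · have hv : (fun k => ((Function.update (fun _ => (1 : Fin 4)) k₀ 2 k : Fin 4) : ℕ))
          = Function.update (fun _ => (1 : ℕ)) k₀ 2 := by
        funext k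
        by_cases hk : k = k₀
        · subst hk; rw [Function.update_self, Function.update_self]; rfl
        · rw [Function.update_of_ne hk, Function.update_of_ne hk]; rfl
      have hsum : ∑ k, ((Function.update (fun _ => (1 : Fin 4)) k₀ 2 k : Fin 4) : ℕ) = N + 1 := by
        rw [show (∑ k, ((Function.update (fun _ => (1 : Fin 4)) k₀ 2 k : Fin 4) : ℕ))
            = ∑ k, Function.update (fun _ => (1 : ℕ)) k₀ 2 k from by rw [← hv],
          Finset.sum_update_of_mem (Finset.mem_univ k₀)]
        rw [Finset.sum_const, Finset.card_sdiff_of_subset (Finset.subset_univ _), Finset.card_singleton,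
          Finset.card_univ, Fintype.card_fin, smul_eq_mul, mul_one]
        omega
      refine ⟨fun k => ?_, ?_, ?_⟩
      · by_cases hk : k = k₀
        · subst hk; rw [Function.update_self]; norm_num
        · rw [Function.update_of_ne hk]; exact le_refl _
      · rw [hsum]; omega
      · rw [hsum]; omega

end AuxSmolyak
section AuxSmolyak2

open Finset

lemma smolyak_two_eval {node weight : (n : ℕ) → Fin n → ℝ} (hGH : IsGaussHermite node weight)
    {N : ℕ} (hN : 1 ≤ N) (φ : (Fin N → ℝ) → ℝ) :
    smolyak node weight 2 N φ
      = φ (fun _ => 0)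
        + ∑ k : Fin N, ∑ j : Fin 3,
            (![(1:ℝ)/2, 1/2, -1] j) * φ (fun i => if i = k then (![(-1:ℝ), 1, 0] j) else 0) := by
  classical
  have hupne : ∀ k : Fin N,
      (fun _ => (1 : Fin 4)) ≠ Function.update (fun _ => (1 : Fin 4)) k 2 := by
    intro k h
    have := congrFun h k
    rw [Function.update_self] at this
    exact absurd this (by decide)
  have hupinj : ∀ k k' : Fin N,
      Function.update (fun _ => (1 : Fin 4)) k 2 = Function.update (fun _ => (1 : Fin 4)) k' 2
        → k = k' := by
    intro k k' h
    by_contra hkk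
    have := congrFun h k
    rw [Function.update_self, Function.update_of_ne hkk] at this
    exact absurd this (by decide)
  have hval1 : tensorApply (fun k ψ =>
        ghQuad node weight (((fun _ => (1:Fin 4)) k : Fin 4) : ℕ) ψ
          - ghQuad node weight ((((fun _ => (1:Fin 4)) k : Fin 4) : ℕ) - 1) ψ) φ
      = φ (fun _ => 0) := by
    apply tensorApply_eval
    intro k ψ
    show ghQuad node weight 1 ψ - ghQuad node weight 0 ψ = ψ 0
    rw [ghQuad_one' hGH, ghQuad_zero', sub_zero]
  have hval2 : ∀ k₀ : Fin N, tensorApply (fun k ψ =>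
        ghQuad node weight ((Function.update (fun _ => (1:Fin 4)) k₀ 2 k : Fin 4) : ℕ) ψ
          - ghQuad node weight (((Function.update (fun _ => (1:Fin 4)) k₀ 2 k : Fin 4) : ℕ) - 1) ψ) φ
      = ∑ j : Fin 3,
          (![(1:ℝ)/2, 1/2, -1] j) * φ (fun i => if i = k₀ then (![(-1:ℝ),1,0] j) else 0) := by
    intro k₀
    apply tensorApply_mix
    · intro k hk ψ
      rw [Function.update_of_ne hk]
      show ghQuad node weight 1 ψ - ghQuad node weight 0 ψ = ψ 0
      rw [ghQuad_one' hGH, ghQuad_zero', sub_zero]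
    · intro ψ
      rw [Function.update_self]
      show ghQuad node weight 2 ψ - ghQuad node weight 1 ψ = _
      rw [ghQuad_two' hGH, ghQuad_one' hGH, Fin.sum_univ_three]
      simp
      ring
  have key : ∀ i : Fin N → Fin 4,
      (if (∀ k, 1 ≤ (i k : ℕ)) ∧ N ≤ (∑ k, (i k : ℕ)) ∧ (∑ k, (i k : ℕ)) ≤ 2 + N - 1 then
        tensorApply (fun k ψ =>
          ghQuad node weight (i k : ℕ) ψ - ghQuad node weight ((i k : ℕ) - 1) ψ) φ
      else 0)
      = (if i = (fun _ => (1 : Fin 4)) then φ (fun _ => 0) else 0)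
        + ∑ k : Fin N, (if i = Function.update (fun _ => (1 : Fin 4)) k 2 then
            ∑ j : Fin 3,
              (![(1:ℝ)/2,1/2,-1] j) * φ (fun i' => if i' = k then (![(-1:ℝ),1,0] j) else 0)
          else 0) := by
    intro i
    by_cases hc : (∀ k, 1 ≤ (i k : ℕ)) ∧ N ≤ (∑ k, (i k : ℕ)) ∧ (∑ k, (i k : ℕ)) ≤ 2 + N - 1
    · rw [if_pos hc]
      rcases (cond_iff hN i).mp hc with hic | ⟨k₀, hik⟩
      · subst hic
        rw [if_pos rfl, hval1]
        have : ∀ k : Fin N, ((fun _ => (1 : Fin 4)) = Function.update (fun _ => (1 : Fin 4)) k 2)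
            = False := fun k => eq_false (hupne k)
        rw [Finset.sum_eq_zero fun k _ => by rw [if_neg (hupne k)], add_zero]
      · subst hik
        rw [if_neg (fun h => hupne k₀ h.symm), hval2 k₀, zero_add]
        rw [Finset.sum_eq_single k₀]
        · rw [if_pos rfl]
        · intro k _ hk
          rw [if_neg (fun h => hk (hupinj k₀ k h).symm)]
        · intro h; exact absurd (Finset.mem_univ k₀) h
    · rw [if_neg hc]
      have hnot := fun h => hc ((cond_iff hN i).mpr h)
      rw [if_neg (fun h => hnot (Or.inl h)), zero_add]
      exact (Finset.sum_eq_zero fun k _ => by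
        rw [if_neg (fun h => hnot (Or.inr ⟨k, h⟩))]).symm
  rw [smolyak]
  rw [Finset.sum_congr rfl (fun i _ => key i), Finset.sum_add_distrib]
  congr 1
  · rw [Finset.sum_ite_eq' univ (fun _ => (1 : Fin 4))
      (fun _ => φ (fun _ => 0)), if_pos (Finset.mem_univ _)]
  · rw [Finset.sum_comm]
    refine Finset.sum_congr rfl fun k _ => ?_
    rw [Finset.sum_ite_eq' univ (Function.update (fun _ => (1 : Fin 4)) k 2) _,
      if_pos (Finset.mem_univ _)]

end AuxSmolyak2
section AuxRad

open Finset

lemma radExp_prod {N : ℕ} (f : Fin N → ℝ → ℝ) :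
    radExp N (fun s => ∏ j, f j (s j)) = ∏ j, ((f j 1 + f j (-1)) / 2) := by
  unfold radExp
  have : ∑ s : Fin N → Bool, ∏ j, f j (if s j then 1 else -1)
      = ∏ j, (∑ b : Bool, f j (if b then 1 else -1)) := by
    rw [Finset.prod_univ_sum]
    rw [← Fintype.piFinset_univ]
  rw [this]
  have h2 : ∀ j : Fin N, (∑ b : Bool, f j (if b then 1 else -1)) = f j 1 + f j (-1) := by
    intro j; simp [Fintype.sum_bool]
  rw [Finset.prod_congr rfl (fun j _ => h2 j)]
  rw [Finset.prod_div_distrib]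
  · rw [Finset.prod_const, Finset.card_univ, Fintype.card_fin]
    rw [one_div, inv_mul_eq_div]

lemma radExp_const {N : ℕ} (c : ℝ) : radExp N (fun _ => c) = c := by
  unfold radExp
  rw [Finset.sum_const, Finset.card_univ]
  have : Fintype.card (Fin N → Bool) = 2 ^ N := by
    simp [Fintype.card_fun]
  rw [this, nsmul_eq_mul]
  have h2 : ((2:ℝ)) ^ N ≠ 0 := by positivity
  push_cast
  field_simp

lemma radExp_add {N : ℕ} (g₁ g₂ : (Fin N → ℝ) → ℝ) :
    radExp N (fun s => g₁ s + g₂ s) = radExp N g₁ + radExp N g₂ := by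
  unfold radExp
  rw [Finset.sum_add_distrib]
  ring

lemma radExp_smul {N : ℕ} (c : ℝ) (g : (Fin N → ℝ) → ℝ) :
    radExp N (fun s => c * g s) = c * radExp N g := by
  unfold radExp
  rw [← Finset.mul_sum]
  ring

lemma radExp_neg_arg {N : ℕ} (g : (Fin N → ℝ) → ℝ) :
    radExp N (fun s => g (fun k => - s k)) = radExp N g := by
  unfold radExp
  congr 1
  have hbij : Function.Bijective (fun (s : Fin N → Bool) (k : Fin N) => ! s k) := by
    apply Function.Involutive.bijective
    intro s; funext k; simp
  refine (Fintype.sum_bijective _ hbij _ _ fun s => ?_).symm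
  congr 1
  funext k
  cases hs : s k <;> simp [hs]

lemma radExp_odd {N : ℕ} (g : (Fin N → ℝ) → ℝ)
    (hg : ∀ x : Fin N → ℝ, g (fun k => - x k) = - g x) : radExp N g = 0 := by
  have h1 : radExp N (fun s => g (fun k => - s k)) = radExp N g := radExp_neg_arg g
  have h2 : radExp N (fun s => g (fun k => - s k)) = radExp N (fun s => (-1) * g s) := by
    congr 1; funext s; rw [hg s]; ring
  rw [h2, radExp_smul] at h1
  linarith

lemma radExp_pair {N : ℕ} (j k : Fin N) :
    radExp N (fun s => s j * s k) = if j = k then 1 else 0 := by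
  by_cases hjk : j = k
  · subst hjk
    rw [if_pos rfl]
    have hp := radExp_prod (N := N) (fun i t => if i = j then t * t else 1)
    have heq : (fun s : Fin N → ℝ => s j * s j)
        = fun s => ∏ i, if i = j then s i * s i else 1 := by
      funext s
      rw [Finset.prod_ite_eq' univ j (fun i => s i * s i)]
      simp
    rw [heq, hp]
    refine Finset.prod_eq_one fun i _ => ?_
    by_cases hi : i = j <;> simp [hi] <;> norm_num
  · rw [if_neg hjk]
    have hp := radExp_prod (N := N) (fun i t => if i = j ∨ i = k then t else 1)
    have heq : (fun s : Fin N → ℝ => s j * s k)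
        = fun s => ∏ i, if i = j ∨ i = k then s i else 1 := by
      funext s
      have h1 : ∀ i : Fin N, (if i = j ∨ i = k then s i else 1)
          = (if i ∈ ({j, k} : Finset (Fin N)) then s i else 1) := by
        intro i; simp [Finset.mem_insert, Finset.mem_singleton]
      rw [Finset.prod_congr rfl (fun i _ => h1 i)]
      rw [Finset.prod_ite_mem univ ({j, k} : Finset (Fin N)) (fun i => s i)]
      rw [Finset.univ_inter, Finset.prod_pair hjk]
    rw [heq, hp]
    refine Finset.prod_eq_zero (Finset.mem_univ j) ?_
    simp

lemma radExp_lin {N : ℕ} (b : Fin N → ℝ) :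
    radExp N (fun s => ∑ j, b j * s j) = 0 := by
  apply radExp_odd
  intro x
  simp [mul_neg]

lemma radExp_sq {N : ℕ} (b : Fin N → ℝ) :
    radExp N (fun s => (∑ j, b j * s j) ^ 2) = ∑ j, b j ^ 2 := by
  have hexp : (fun s : Fin N → ℝ => (∑ j, b j * s j) ^ 2)
      = fun s => ∑ j, ∑ k, (b j * b k) * (s j * s k) := by
    funext s
    rw [sq, Finset.sum_mul_sum]
    refine Finset.sum_congr rfl fun j _ => Finset.sum_congr rfl fun k _ => by ring
  rw [hexp]
  have hsum : ∀ (F : Fin N → (Fin N → ℝ) → ℝ),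
      radExp N (fun s => ∑ j, F j s) = ∑ j, radExp N (F j) := by
    intro F
    unfold radExp
    rw [Finset.sum_comm, Finset.mul_sum]
  rw [hsum (fun j s => ∑ k, (b j * b k) * (s j * s k))]
  have : ∀ j : Fin N, radExp N (fun s => ∑ k, (b j * b k) * (s j * s k)) = b j ^ 2 := by
    intro j
    rw [hsum (fun k s => (b j * b k) * (s j * s k))]
    have : ∀ k : Fin N, radExp N (fun s => (b j * b k) * (s j * s k))
        = (b j * b k) * (if j = k then 1 else 0) := by
      intro k
      rw [radExp_smul, radExp_pair]
    rw [Finset.sum_congr rfl fun k _ => this k]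
    simp [mul_ite, sq]
  rw [Finset.sum_congr rfl fun j _ => this j]

lemma radExp_cube {N : ℕ} (b : Fin N → ℝ) :
    radExp N (fun s => (∑ j, b j * s j) ^ 3) = 0 := by
  apply radExp_odd
  intro x
  have h1 : (∑ j, b j * -x j) = - ∑ j, b j * x j := by simp [mul_neg]
  rw [h1]
  ring

end AuxRad

/-- for `p ∈ {1,2,3}` and `φ(y) = X̄(N;y)^p`, the level-2 Smolyak sparse grid
quadrature reproduces the Rademacher expectation exactly:
`E[(X̄(N;ζ))^p] = A(2,N)φ`. -/
theorem smolyak_exact_low_moments (node weight : (n : ℕ) → Fin n → ℝ)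
    (hGH : IsGaussHermite node weight) (lam eps T : ℝ) (hT : 0 < T)
    (N : ℕ) (hN : 1 ≤ N) (p : ℕ) (hp : p = 1 ∨ p = 2 ∨ p = 3) :
    radExp N (fun s => eulerX lam eps (T / N) N s ^ p) =
      smolyak node weight 2 N (fun y => eulerX lam eps (T / N) N y ^ p) := by
  classical
  obtain ⟨a, b, hE⟩ : ∃ (a : ℝ) (b : Fin N → ℝ),
      ∀ y : Fin N → ℝ, eulerX lam eps (T / N) N y = a + ∑ j, b j * y j :=
    ⟨(1 + lam * (T / N)) ^ N,
     fun j => (1 + lam * (T / N)) ^ (N - ((j : ℕ) + 1)) * eps * Real.sqrt (T / N),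
     fun y => rfl⟩
  rw [smolyak_two_eval hGH hN]
  have hφ0 : (eulerX lam eps (T / N) N fun _ => 0) ^ p = a ^ p := by
    rw [hE]
    simp
  have hφpt : ∀ (k : Fin N) (t : ℝ),
      (eulerX lam eps (T / N) N fun i => if i = k then t else 0) ^ p
        = (a + b k * t) ^ p := by
    intro k t
    rw [hE]
    congr 2
    simp [mul_ite, mul_zero]
  have hLfn : (fun s : Fin N → ℝ => eulerX lam eps (T / N) N s ^ p)
      = fun s => (a + ∑ j, b j * s j) ^ p := by
    funext s; rw [hE]
  have hR : ∀ k : Fin N,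
      (∑ j : Fin 3, (![(1:ℝ)/2, 1/2, -1] j)
        * (eulerX lam eps (T / N) N fun i => if i = k then (![(-1:ℝ), 1, 0] j) else 0) ^ p)
      = (1/2) * (a + b k * (-1)) ^ p + (1/2) * (a + b k * 1) ^ p + (-1) * (a + b k * 0) ^ p := by
    intro k
    rw [Fin.sum_univ_three]
    rw [hφpt k, hφpt k, hφpt k]
    norm_num [Matrix.cons_val_two]
  rw [hφ0, Finset.sum_congr rfl fun k _ => hR k, hLfn]
  rcases hp with rfl | rfl | rfl
  · have hfn : (fun s : Fin N → ℝ => (a + ∑ j, b j * s j) ^ 1)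
        = fun s => a + ∑ j, b j * s j := by
      funext s; rw [pow_one]
    rw [hfn, radExp_add (fun _ => a) (fun s => ∑ j, b j * s j), radExp_const, radExp_lin]
    rw [Finset.sum_eq_zero (fun k _ => by ring :
      ∀ k ∈ Finset.univ, (1/2) * (a + b k * (-1)) ^ 1 + (1/2) * (a + b k * 1) ^ 1
        + (-1) * (a + b k * 0) ^ 1 = 0)]
    ring
  · have hfn : (fun s : Fin N → ℝ => (a + ∑ j, b j * s j) ^ 2)
        = fun s => a ^ 2 + ((2 * a) * (∑ j, b j * s j) + (∑ j, b j * s j) ^ 2) := by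
      funext s; ring
    rw [hfn, radExp_add, radExp_const, radExp_add, radExp_smul, radExp_lin, radExp_sq]
    rw [Finset.sum_congr rfl (fun k _ => by ring :
      ∀ k ∈ Finset.univ, (1/2) * (a + b k * (-1)) ^ 2 + (1/2) * (a + b k * 1) ^ 2
        + (-1) * (a + b k * 0) ^ 2 = b k ^ 2)]
    ring
  · have hfn : (fun s : Fin N → ℝ => (a + ∑ j, b j * s j) ^ 3)
        = fun s => a ^ 3 + ((3 * a ^ 2) * (∑ j, b j * s j)
            + ((3 * a) * ((∑ j, b j * s j) ^ 2) + (∑ j, b j * s j) ^ 3)) := by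
      funext s; ring
    rw [hfn, radExp_add, radExp_const, radExp_add, radExp_smul, radExp_lin, radExp_add,
      radExp_smul, radExp_sq, radExp_cube]
    rw [Finset.sum_congr rfl (fun k _ => by ring :
      ∀ k ∈ Finset.univ, (1/2) * (a + b k * (-1)) ^ 3 + (1/2) * (a + b k * 1) ^ 3
        + (-1) * (a + b k * 0) ^ 3 = 3 * a * b k ^ 2)]
    rw [Finset.mul_sum]
    rw [Finset.sum_congr rfl (fun k _ => by ring : ∀ k ∈ Finset.univ,
      3 * a * b k ^ 2 = a * 3 * b k ^ 2)]
    ring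
end

section
/- Assume there exist c > 0 and β ∈ (0,1) such that |R_{n,γ}(Γ_{y,γ})| ≤ (c/√(2π)) n^{−γ/2} e^{−βy²/2} for all n ≥ 1, 1 ≤ γ ≤ 2n, y ∈ ℝ. Let L ≥ 1, l ≥ 2 and i_1,…,i_l be positive integers with i_1 + ⋯ + i_l = L + l − 1, let G = {m : 1 ≤ m ≤ l−1, i_m > 1}, and define 𝓡(y_1,…,y_l) = − R_{i_l,2i_l}(Γ_{y_l,2i_l}) · ∏_{n∈G} [ R_{i_n,2i_n−2}(Γ_{y_n,2i_n−2}) − R_{i_n−1,2i_n−2}(Γ_{y_n,2i_n−2}) ]. Then |𝓡(y_1,…,y_l)| ≤ ((3c/2)^{#G+1}/(2π)^{(#G+1)/2}) · exp( −β( Σ_{n∈G} y_n² + y_l² )/2 ), where #G is the cardinality of G. -/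
open MeasureTheory ProbabilityTheory Finset

/-- bound on the product `𝓡` of Gauss–Hermite Peano-kernel errors appearing in
the sparse grid error analysis. -/
theorem peano_kernel_product_bound (node weight : (n : ℕ) → Fin n → ℝ)
    (hGH : IsGaussHermite node weight) (c β : ℝ) (hc : 0 < c) (hβ0 : 0 < β) (hβ1 : β < 1)
    (hR : ∀ n : ℕ, 1 ≤ n → ∀ γ : ℕ, 1 ≤ γ → γ ≤ 2 * n → ∀ y : ℝ,
      |ghErr node weight n γ y| ≤
        c / Real.sqrt (2 * Real.pi) * (n : ℝ) ^ (-(γ : ℝ) / 2) * Real.exp (-β * y ^ 2 / 2))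
    (L l : ℕ) (hL : 1 ≤ L) (hl : 2 ≤ l) (i : Fin l → ℕ) (hi1 : ∀ j, 1 ≤ i j)
    (hisum : ∑ j, i j = L + l - 1) (y : Fin l → ℝ) :
    |(-(ghErr node weight (i ⟨l - 1, by omega⟩) (2 * i ⟨l - 1, by omega⟩) (y ⟨l - 1, by omega⟩))) *
        ∏ m ∈ Finset.univ.filter (fun m : Fin l => (m : ℕ) + 1 < l ∧ 1 < i m),
          (ghErr node weight (i m) (2 * i m - 2) (y m) -
            ghErr node weight (i m - 1) (2 * i m - 2) (y m))| ≤
      (3 * c / 2) ^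
          ((Finset.univ.filter (fun m : Fin l => (m : ℕ) + 1 < l ∧ 1 < i m)).card + 1) /
        (2 * Real.pi) ^
          ((((Finset.univ.filter (fun m : Fin l => (m : ℕ) + 1 < l ∧ 1 < i m)).card : ℝ) + 1) / 2) *
        Real.exp (-β *
          ((∑ m ∈ Finset.univ.filter (fun m : Fin l => (m : ℕ) + 1 < l ∧ 1 < i m), (y m) ^ 2) +
            (y ⟨l - 1, by omega⟩) ^ 2) / 2) := by
  classical
  have hπ : 0 < Real.sqrt (2 * Real.pi) := Real.sqrt_pos.mpr (by positivity)
  set G := Finset.univ.filter (fun m : Fin l => (m : ℕ) + 1 < l ∧ 1 < i m) with hG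
  set C : ℝ := 3 * c / 2 / Real.sqrt (2 * Real.pi) with hC
  have hC0 : 0 < C := by positivity
  set lst : Fin l := ⟨l - 1, by omega⟩
  -- bound for each factor in the product
  have hfac : ∀ m ∈ G,
      |ghErr node weight (i m) (2 * i m - 2) (y m) -
        ghErr node weight (i m - 1) (2 * i m - 2) (y m)| ≤
      C * Real.exp (-β * (y m) ^ 2 / 2) := by
    intro m hm
    have h2 : 1 < i m := (Finset.mem_filter.mp hm).2.2
    set n := i m with hn
    have hR1 := hR n (by omega) (2 * n - 2) (by omega) (by omega) (y m)
    have hR2 := hR (n - 1) (by omega) (2 * n - 2) (by omega) (by omega) (y m)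
    have hcast : ((2 * n - 2 : ℕ) : ℝ) = 2 * ((n - 1 : ℕ) : ℝ) := by
      have h : (2 * n - 2 : ℕ) = 2 * (n - 1) := by omega
      rw [h]; push_cast; ring
    have hexp : -((2 * n - 2 : ℕ) : ℝ) / 2 = -(((n - 1 : ℕ) : ℝ)) := by
      rw [hcast]; ring
    have hA : (n : ℝ) ^ (-((2 * n - 2 : ℕ) : ℝ) / 2) ≤ 1 / 2 := by
      rw [hexp, Real.rpow_neg (by positivity), Real.rpow_natCast]
      have h2n : (2 : ℝ) ≤ (n : ℝ) ^ (n - 1) := by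
        calc (2 : ℝ) ≤ (n : ℝ) := by exact_mod_cast h2
          _ ≤ (n : ℝ) ^ (n - 1) := le_self_pow₀ (by exact_mod_cast Nat.one_le_of_lt h2)
              (by omega)
      rw [show (1 : ℝ) / 2 = 2⁻¹ by norm_num]
      exact inv_anti₀ (by norm_num) h2n
    have hB : ((n - 1 : ℕ) : ℝ) ^ (-((2 * n - 2 : ℕ) : ℝ) / 2) ≤ 1 := by
      rw [hexp, Real.rpow_neg (by positivity), Real.rpow_natCast]
      have h1n : (1 : ℝ) ≤ ((n - 1 : ℕ) : ℝ) ^ (n - 1) :=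
        one_le_pow₀ (by exact_mod_cast (by omega : 1 ≤ n - 1))
      exact inv_le_one_of_one_le₀ h1n
    have hE : (0 : ℝ) < Real.exp (-β * (y m) ^ 2 / 2) := Real.exp_pos _
    calc |ghErr node weight n (2 * n - 2) (y m) -
            ghErr node weight (n - 1) (2 * n - 2) (y m)|
        ≤ |ghErr node weight n (2 * n - 2) (y m)| +
            |ghErr node weight (n - 1) (2 * n - 2) (y m)| := abs_sub _ _
      _ ≤ c / Real.sqrt (2 * Real.pi) * (n : ℝ) ^ (-((2 * n - 2 : ℕ) : ℝ) / 2) *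
              Real.exp (-β * (y m) ^ 2 / 2) +
            c / Real.sqrt (2 * Real.pi) * ((n - 1 : ℕ) : ℝ) ^ (-((2 * n - 2 : ℕ) : ℝ) / 2) *
              Real.exp (-β * (y m) ^ 2 / 2) := add_le_add hR1 hR2
      _ = c / Real.sqrt (2 * Real.pi) *
            ((n : ℝ) ^ (-((2 * n - 2 : ℕ) : ℝ) / 2) +
              ((n - 1 : ℕ) : ℝ) ^ (-((2 * n - 2 : ℕ) : ℝ) / 2)) *
            Real.exp (-β * (y m) ^ 2 / 2) := by ring
      _ ≤ c / Real.sqrt (2 * Real.pi) * (3 / 2) * Real.exp (-β * (y m) ^ 2 / 2) :=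
          mul_le_mul_of_nonneg_right
            (mul_le_mul_of_nonneg_left (by linarith) (by positivity)) hE.le
      _ = C * Real.exp (-β * (y m) ^ 2 / 2) := by rw [hC]; ring
  have hlast : |ghErr node weight (i lst) (2 * i lst) (y lst)| ≤
      C * Real.exp (-β * (y lst) ^ 2 / 2) := by
    have h1 : 1 ≤ i lst := hi1 lst
    have hR1 := hR (i lst) h1 (2 * i lst) (by omega) (by omega) (y lst)
    have hexp : -((2 * i lst : ℕ) : ℝ) / 2 = -((i lst : ℕ) : ℝ) := by push_cast; ring
    have hA : (i lst : ℝ) ^ (-((2 * i lst : ℕ) : ℝ) / 2) ≤ 1 := by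
      rw [hexp, Real.rpow_neg (by positivity), Real.rpow_natCast]
      exact inv_le_one_of_one_le₀ (one_le_pow₀ (by exact_mod_cast h1))
    have hE : (0 : ℝ) < Real.exp (-β * (y lst) ^ 2 / 2) := Real.exp_pos _
    have hcs : (0 : ℝ) ≤ c / Real.sqrt (2 * Real.pi) := by positivity
    calc |ghErr node weight (i lst) (2 * i lst) (y lst)|
        ≤ c / Real.sqrt (2 * Real.pi) * (i lst : ℝ) ^ (-((2 * i lst : ℕ) : ℝ) / 2) *
            Real.exp (-β * (y lst) ^ 2 / 2) := hR1
      _ ≤ c / Real.sqrt (2 * Real.pi) * (3 / 2) * Real.exp (-β * (y lst) ^ 2 / 2) :=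
          mul_le_mul_of_nonneg_right
            (mul_le_mul_of_nonneg_left (by linarith) (by positivity)) hE.le
      _ = C * Real.exp (-β * (y lst) ^ 2 / 2) := by rw [hC]; ring
  -- combine
  have key : |(-(ghErr node weight (i lst) (2 * i lst) (y lst))) *
      ∏ m ∈ G, (ghErr node weight (i m) (2 * i m - 2) (y m) -
        ghErr node weight (i m - 1) (2 * i m - 2) (y m))| ≤
      C ^ (G.card + 1) *
        Real.exp (-β * ((∑ m ∈ G, (y m) ^ 2) + (y lst) ^ 2) / 2) := by
    rw [abs_mul, abs_neg, Finset.abs_prod]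
    have hprod : ∏ m ∈ G, |ghErr node weight (i m) (2 * i m - 2) (y m) -
          ghErr node weight (i m - 1) (2 * i m - 2) (y m)| ≤
        ∏ m ∈ G, C * Real.exp (-β * (y m) ^ 2 / 2) :=
      Finset.prod_le_prod (fun m _ => abs_nonneg _) hfac
    have step := mul_le_mul hlast hprod
      (Finset.prod_nonneg fun m _ => abs_nonneg _)
      (by positivity)
    refine step.trans (le_of_eq ?_)
    rw [Finset.prod_mul_distrib, Finset.prod_const, ← Real.exp_sum]
    have hs : (∑ m ∈ G, -β * (y m) ^ 2 / 2) =
        -β * (∑ m ∈ G, (y m) ^ 2) / 2 := by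
      rw [Finset.mul_sum, Finset.sum_div]
    rw [hs,
      show -β * ((∑ m ∈ G, (y m) ^ 2) + (y lst) ^ 2) / 2 =
        (-β * (y lst) ^ 2 / 2) + (-β * (∑ m ∈ G, (y m) ^ 2) / 2) from by ring,
      Real.exp_add]
    ring
  refine key.trans (le_of_eq ?_)
  congr 1
  rw [hC, div_pow]
  congr 1
  rw [Real.sqrt_eq_rpow, ← Real.rpow_natCast ((2 * Real.pi) ^ ((1:ℝ)/2)) (G.card + 1),
    ← Real.rpow_mul (by positivity)]
  congr 1
  push_cast
  ring
end
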